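/- Let (A, N) be a quadratic normalisation with N-neutral element e such that the weak domino rule is valid for N̄ (i.e. the domino rule can fail only when the upper-right part of the domino diagram contains e). Then (A, N) is of class (5,4). -/
import Mathlib


/-- Apply `N` to the length-two factor of `w` at positions `i, i+1` (1-indexed). -/
def applyAt {A : Type*} (N : List A → List A) (i : ℕ) (w : List A) : List A :=
  w.take (i - 1) ++ N ((w.drop (i - 1)).take 2) ++ w.drop (i + 1)

/-- Apply `N` to length-two factors at the given sequence of positions,
leftmost position in the list applied first. -/
def applySeq {A : Type*} (N : List A → List A) (pos : List ℕ) (w : List A) : List A :=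
  pos.foldl (fun v i => applyAt N i v) w

/-- The alternating sequence of positions `s, 3-s, s, ...` of length `k` (with `s ∈ {1,2}`). -/
def altSeq : ℕ → ℕ → List ℕ
  | _, 0 => []
  | s, k + 1 => s :: altSeq (3 - s) k

/-- A quadratic normalisation: a length-preserving map, identity on letters,
satisfying `N(u|v|w) = N(u|N(v)|w)`, for which a word is normal iff all its
length-two factors are, and which is computed by finitely many applications
of its restriction to length-two factors. -/
structure QuadraticNormalisation {A : Type*} (N : List A → List A) : Prop where
  len : ∀ w : List A, (N w).length = w.length
  letter : ∀ a : A, N [a] = [a]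
  mid : ∀ u v w : List A, N (u ++ v ++ w) = N (u ++ N v ++ w)
  normal_iff : ∀ w : List A, N w = w ↔
    ∀ (u v : List A) (a b : A), w = u ++ a :: b :: v → N [a, b] = [a, b]
  reach : ∀ w : List A, ∃ pos : List ℕ, N w = applySeq N pos w

/-- The normalisation is of left-class `m`. -/
def LeftClass {A : Type*} (N : List A → List A) (m : ℕ) : Prop :=
  ∀ w : List A, w.length = 3 → N w = applySeq N (altSeq 1 m) w

/-- The normalisation is of right-class `n`. -/
def RightClass {A : Type*} (N : List A → List A) (n : ℕ) : Prop :=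
  ∀ w : List A, w.length = 3 → N w = applySeq N (altSeq 2 n) w

/-- The normalisation is of class `(m, n)`. -/
def IsClass {A : Type*} (N : List A → List A) (m n : ℕ) : Prop :=
  LeftClass N m ∧ RightClass N n

/-- `e` is an `N`-neutral element: `N(w|e) = N(e|w) = N(w)|e` for every word `w`. -/
def Neutral {A : Type*} (N : List A → List A) (e : A) : Prop :=
  ∀ w : List A, N (w ++ [e]) = N w ++ [e] ∧ N (e :: w) = N w ++ [e]

/-- The weak domino rule: the domino rule may fail only when the upper-right
part of the domino diagram (i.e. one of `s1'`, `s2'`, `t1`, `t2`) contains `e`. -/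
def WeakDominoRule {A : Type*} (N : List A → List A) (e : A) : Prop :=
  ∀ s1 s2 s1' s2' t0 t1 t2 : A,
    s1' ≠ e → s2' ≠ e → t1 ≠ e → t2 ≠ e →
    N [t0, s1] = [s1', t1] → N [t1, s2] = [s2', t2] →
    N [s1, s2] = [s1, s2] → N [s1', t1] = [s1', t1] → N [s2', t2] = [s2', t2] →
    N [s1', s2'] = [s1', s2']

section Aux

variable {A : Type*} {N : List A → List A} {e : A}

lemma qn_idem (hN : QuadraticNormalisation N) (w : List A) : N (N w) = N w := by
  have h := hN.mid [] w []
  simpa using h.symm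

lemma qn_pair (hN : QuadraticNormalisation N) (a b : A) : ∃ p q, N [a, b] = [p, q] := by
  have h : (N [a, b]).length = 2 := by simpa using hN.len [a, b]
  exact List.length_eq_two.mp h

lemma qn_pair_fix (hN : QuadraticNormalisation N) {a b p q : A}
    (h : N [a, b] = [p, q]) : N [p, q] = [p, q] := by
  have := qn_idem hN [a, b]
  rwa [h] at this

lemma neutral_right (hN : QuadraticNormalisation N) (he : Neutral N e) (a : A) :
    N [a, e] = [a, e] := by
  have h := (he [a]).1
  simpa [hN.letter] using h

lemma neutral_left (hN : QuadraticNormalisation N) (he : Neutral N e) (a : A) :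
    N [e, a] = [a, e] := by
  have h := (he [a]).2
  simpa [hN.letter] using h

lemma normal_of_pairs (hN : QuadraticNormalisation N) {x y z : A}
    (h1 : N [x, y] = [x, y]) (h2 : N [y, z] = [y, z]) : N [x, y, z] = [x, y, z] := by
  rw [hN.normal_iff]
  rintro u v a b huv
  rcases u with _ | ⟨a1, _ | ⟨a2, _ | ⟨a3, u⟩⟩⟩ <;> simp_all

lemma applyAt_one (N : List A → List A) (x y z : A) :
    applyAt N 1 [x, y, z] = N [x, y] ++ [z] := by
  simp [applyAt]

lemma applyAt_two (N : List A → List A) (x y z : A) :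
    applyAt N 2 [x, y, z] = x :: N [y, z] := by
  simp [applyAt]

lemma N_applyAt_one (hN : QuadraticNormalisation N) (x y z : A) :
    N (applyAt N 1 [x, y, z]) = N [x, y, z] := by
  have h := hN.mid [] [x, y] [z]
  rw [applyAt_one]
  simpa using h.symm

lemma N_applyAt_two (hN : QuadraticNormalisation N) (x y z : A) :
    N (applyAt N 2 [x, y, z]) = N [x, y, z] := by
  have h := hN.mid [x] [y, z] []
  rw [applyAt_two]
  simpa using h.symm

/-- The key lemma: applying positions `2,1,2,1` to any length-three word yields
a normal word, hence computes `N`. -/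
lemma key (hN : QuadraticNormalisation N) (he : Neutral N e)
    (hwd : WeakDominoRule N e) (x y z : A) :
    N [x, y, z] = applySeq N [2, 1, 2, 1] [x, y, z] := by
  obtain ⟨u1, u2, h1⟩ := qn_pair hN y z
  obtain ⟨s1', t1, h2⟩ := qn_pair hN x u1
  obtain ⟨s2', t2, h3⟩ := qn_pair hN t1 u2
  obtain ⟨p, q, h4⟩ := qn_pair hN s1' s2'
  have fix1 : N [u1, u2] = [u1, u2] := qn_pair_fix hN h1
  have fix2 : N [s1', t1] = [s1', t1] := qn_pair_fix hN h2
  have fix3 : N [s2', t2] = [s2', t2] := qn_pair_fix hN h3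
  have fix4 : N [p, q] = [p, q] := qn_pair_fix hN h4
  -- compute the word obtained after applying the sequence 2,1,2,1
  have hv : applySeq N [2, 1, 2, 1] [x, y, z] = [p, q, t2] := by
    show applyAt N 1 (applyAt N 2 (applyAt N 1 (applyAt N 2 [x, y, z]))) = _
    rw [applyAt_two, h1, applyAt_one, h2]
    show applyAt N 1 (applyAt N 2 [s1', t1, u2]) = _
    rw [applyAt_two, h3, applyAt_one, h4]
    rfl
  -- the remaining pair [q, t2] is normal
  have hqt : N [q, t2] = [q, t2] := by
    by_cases ht2 : t2 = e
    · subst ht2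
      exact neutral_right hN he q
    · have ht1 : t1 ≠ e := by
        intro h; subst h
        rw [neutral_left hN he u2] at h3
        simp only [List.cons.injEq, and_true] at h3
        exact ht2 h3.2.symm
      have hs2 : s2' ≠ e := by
        intro h; subst h
        rw [neutral_left hN he t2] at fix3
        simp only [List.cons.injEq, and_true] at fix3
        exact ht2 fix3.1
      have hs1 : s1' ≠ e := by
        intro h; subst h
        rw [neutral_left hN he t1] at fix2
        simp only [List.cons.injEq, and_true] at fix2
        exact ht1 fix2.1
      have hdom : N [s1', s2'] = [s1', s2'] :=
        hwd u1 u2 s1' s2' x t1 t2 hs1 hs2 ht1 ht2 h2 h3 fix1 fix2 fix3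
      rw [hdom] at h4
      simp only [List.cons.injEq, and_true] at h4
      rw [← h4.2]
      exact fix3
  have hnorm : N [p, q, t2] = [p, q, t2] := normal_of_pairs hN fix4 hqt
  -- N is preserved along the rewriting sequence
  have e1 : N [x, y, z] = N [x, u1, u2] := by
    have h := hN.mid [x] [y, z] []
    rw [h1] at h
    simpa using h
  have e2 : N [x, u1, u2] = N [s1', t1, u2] := by
    have h := hN.mid [] [x, u1] [u2]
    rw [h2] at h
    simpa using h
  have e3 : N [s1', t1, u2] = N [s1', s2', t2] := by
    have h := hN.mid [s1'] [t1, u2] []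
    rw [h3] at h
    simpa using h
  have e4 : N [s1', s2', t2] = N [p, q, t2] := by
    have h := hN.mid [] [s1', s2'] [t2]
    rw [h4] at h
    simpa using h
  rw [hv, e1, e2, e3, e4, hnorm]

lemma length_three_cases (w : List A) (hw : w.length = 3) :
    ∃ x y z, w = [x, y, z] := by
  rcases w with _ | ⟨x, _ | ⟨y, _ | ⟨z, _ | _⟩⟩⟩ <;> simp_all

end Aux

/-- a quadratic normalisation with an `N`-neutral element `e` for
which the weak domino rule is valid is of class `(5,4)`. -/
theorem weakDomino_implies_class54 {A : Type*} (N : List A → List A)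
    (hN : QuadraticNormalisation N) (e : A) (he : Neutral N e)
    (hwd : WeakDominoRule N e) :
    IsClass N 5 4 := by
  constructor
  · -- LeftClass 5 : positions 1,2,1,2,1
    intro w hw
    obtain ⟨x, y, z, rfl⟩ := length_three_cases w hw
    have hseq : altSeq 1 5 = [1, 2, 1, 2, 1] := rfl
    rw [hseq]
    obtain ⟨p, q, hpq⟩ := qn_pair hN x y
    have h1 : applyAt N 1 [x, y, z] = [p, q, z] := by
      rw [applyAt_one, hpq]; rfl
    have hfold : applySeq N [1, 2, 1, 2, 1] [x, y, z]
        = applySeq N [2, 1, 2, 1] (applyAt N 1 [x, y, z]) := rfl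
    rw [hfold, h1, ← key hN he hwd p q z]
    have := N_applyAt_one hN x y z
    rw [h1] at this
    exact this.symm
  · -- RightClass 4 : positions 2,1,2,1
    intro w hw
    obtain ⟨x, y, z, rfl⟩ := length_three_cases w hw
    have hseq : altSeq 2 4 = [2, 1, 2, 1] := rfl
    rw [hseq]
    exact key hN he hwd x y z
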